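/- Let f : ℝ → ℝ be nondecreasing and right-continuous with f(x) = 0 for all x ≤ 0, and let μ_f be its Lebesgue–Stieltjes measure. Let T > 0, let c be a real-valued function defined on a neighborhood of θ ∈ ℝ, differentiable at θ with derivative L = c'(θ), and assume c(θ) > 0 and c(θ) ≠ T. Set a = (c(θ) − T)⁺ and H(θ') = ∫₀^T f((c(θ') − t)⁺) dt. Then H has a right derivative and a left derivative at θ, given by H'_r(θ) = L·[ f(c(θ)) − f(a) − 1_{L<0}·( μ_f({c(θ)}) − μ_f({a}) ) ] and H'_l(θ) = L·[ f(c(θ)) − f(a) − 1_{L>0}·( μ_f({c(θ)}) − μ_f({a}) ) ]. -/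

import Mathlib

open MeasureTheory Set
open Filter Topology Asymptotics


lemma compRightAux {G c : ℝ → ℝ} {θ L dp dm : ℝ}
    (hp : HasDerivWithinAt G dp (Ici (c θ)) (c θ))
    (hm : HasDerivWithinAt G dm (Iic (c θ)) (c θ))
    (hc : HasDerivAt c L θ) :
    HasDerivWithinAt (fun x => G (c x)) ((if L < 0 then dm else dp) * L) (Ici θ) θ := by
  have hco := hasDerivAt_iff_isLittleO.1 hc
  rcases lt_trichotomy L 0 with hL | hL | hL
  · rw [if_pos hL]
    have hev : ∀ᶠ x in 𝓝[Ici θ] θ, c x ∈ Iic (c θ) := by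
      have h2 : ∀ᶠ x in 𝓝 θ, ‖c x - c θ - (x - θ) • L‖ ≤ (-L/2) * ‖x - θ‖ :=
        isLittleO_iff.mp hco (by linarith)
      filter_upwards [nhdsWithin_le_nhds h2, self_mem_nhdsWithin] with x hx hx'
      have hx0 : (0:ℝ) ≤ x - θ := sub_nonneg.2 hx'
      rw [smul_eq_mul, Real.norm_eq_abs, Real.norm_eq_abs, abs_of_nonneg hx0] at hx
      have h3 := (abs_le.1 hx).2
      have h4 : c x - c θ ≤ (L/2) * (x - θ) := by linarith
      have h5 : (L/2) * (x - θ) ≤ 0 := mul_nonpos_of_nonpos_of_nonneg (by linarith) hx0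
      simpa using h4.trans h5
    have htend : Tendsto c (𝓝[Ici θ] θ) (𝓝[Iic (c θ)] (c θ)) :=
      tendsto_nhdsWithin_iff.2 ⟨hc.continuousAt.continuousWithinAt, hev⟩
    exact HasDerivAtFilter.comp_of_eq (hh₂ := hm) (hh := hc.hasDerivWithinAt) (hL := htend) (hy := rfl)
  · subst hL
    simp only [mul_zero]
    rw [hasDerivWithinAt_iff_isLittleO]
    simp only [smul_zero, sub_zero]
    have hKp : ∀ᶠ y in 𝓝[Ici (c θ)] (c θ), ‖G y - G (c θ)‖ ≤ (max ‖dp‖ ‖dm‖ + 1) * ‖y - c θ‖ := by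
      filter_upwards [isLittleO_iff.mp (hasDerivWithinAt_iff_isLittleO.1 hp) one_pos] with y hy
      calc ‖G y - G (c θ)‖ ≤ ‖G y - G (c θ) - (y - c θ) • dp‖ + ‖(y - c θ) • dp‖ := by
            simpa using norm_add_le (G y - G (c θ) - (y - c θ) • dp) ((y - c θ) • dp)
        _ ≤ 1 * ‖y - c θ‖ + ‖y - c θ‖ * ‖dp‖ := by
            rw [norm_smul]; exact add_le_add hy le_rfl
        _ ≤ (max ‖dp‖ ‖dm‖ + 1) * ‖y - c θ‖ := by
            rw [one_mul]
            nlinarith [norm_nonneg (y - c θ), le_max_left ‖dp‖ ‖dm‖, norm_nonneg dp]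
    have hKm : ∀ᶠ y in 𝓝[Iic (c θ)] (c θ), ‖G y - G (c θ)‖ ≤ (max ‖dp‖ ‖dm‖ + 1) * ‖y - c θ‖ := by
      filter_upwards [isLittleO_iff.mp (hasDerivWithinAt_iff_isLittleO.1 hm) one_pos] with y hy
      calc ‖G y - G (c θ)‖ ≤ ‖G y - G (c θ) - (y - c θ) • dm‖ + ‖(y - c θ) • dm‖ := by
            simpa using norm_add_le (G y - G (c θ) - (y - c θ) • dm) ((y - c θ) • dm)
        _ ≤ 1 * ‖y - c θ‖ + ‖y - c θ‖ * ‖dm‖ := by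
            rw [norm_smul]; exact add_le_add hy le_rfl
        _ ≤ (max ‖dp‖ ‖dm‖ + 1) * ‖y - c θ‖ := by
            rw [one_mul]
            nlinarith [norm_nonneg (y - c θ), le_max_right ‖dp‖ ‖dm‖, norm_nonneg dm]
    have hK : ∀ᶠ y in 𝓝 (c θ), ‖G y - G (c θ)‖ ≤ (max ‖dp‖ ‖dm‖ + 1) * ‖y - c θ‖ := by
      rw [← nhdsLE_sup_nhdsGE (c θ), eventually_sup]
      exact ⟨hKm, hKp⟩
    have hO : (fun x' => G (c x') - G (c θ)) =O[𝓝 θ] fun x' => c x' - c θ :=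
      IsBigO.of_bound _ (hc.continuousAt.eventually hK)
    have ho : (fun x' => c x' - c θ) =o[𝓝 θ] fun x' => x' - θ := by
      simpa using hco
    exact (hO.trans_isLittleO ho).mono nhdsWithin_le_nhds
  · rw [if_neg (by linarith)]
    have hev : ∀ᶠ x in 𝓝[Ici θ] θ, c x ∈ Ici (c θ) := by
      have h2 : ∀ᶠ x in 𝓝 θ, ‖c x - c θ - (x - θ) • L‖ ≤ (L/2) * ‖x - θ‖ :=
        isLittleO_iff.mp hco (by linarith)
      filter_upwards [nhdsWithin_le_nhds h2, self_mem_nhdsWithin] with x hx hx'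
      have hx0 : (0:ℝ) ≤ x - θ := sub_nonneg.2 hx'
      rw [smul_eq_mul, Real.norm_eq_abs, Real.norm_eq_abs, abs_of_nonneg hx0] at hx
      have h3 := (abs_le.1 hx).1
      have h4 : (L/2) * (x - θ) ≤ c x - c θ := by linarith
      have h5 : 0 ≤ (L/2) * (x - θ) := mul_nonneg (by linarith) hx0
      simpa using h5.trans h4
    have htend : Tendsto c (𝓝[Ici θ] θ) (𝓝[Ici (c θ)] (c θ)) :=
      tendsto_nhdsWithin_iff.2 ⟨hc.continuousAt.continuousWithinAt, hev⟩
    exact HasDerivAtFilter.comp_of_eq (hh₂ := hp) (hh := hc.hasDerivWithinAt) (hL := htend) (hy := rfl)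

lemma compLeftAux {G c : ℝ → ℝ} {θ L dp dm : ℝ}
    (hp : HasDerivWithinAt G dp (Ici (c θ)) (c θ))
    (hm : HasDerivWithinAt G dm (Iic (c θ)) (c θ))
    (hc : HasDerivAt c L θ) :
    HasDerivWithinAt (fun x => G (c x)) ((if 0 < L then dm else dp) * L) (Iic θ) θ := by
  have h0 : HasDerivAt (fun x : ℝ => -x) (-1) (-θ) := by
    exact hasDerivAt_neg' (-θ)
  have hc' : HasDerivAt c L (-(-θ)) := by rwa [neg_neg]
  have hcn : HasDerivAt (fun x => c (-x)) (-L) (-θ) := by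
    have := hc'.comp (-θ) h0
    simpa [Function.comp_def, mul_comm] using this
  have hp' : HasDerivWithinAt G dp (Ici (c (-(-θ)))) (c (-(-θ))) := by rwa [neg_neg]
  have hm' : HasDerivWithinAt G dm (Iic (c (-(-θ)))) (c (-(-θ))) := by rwa [neg_neg]
  have h1 := compRightAux (c := fun x => c (-x)) (θ := -θ) hp' hm' hcn
  have hnegW : HasDerivWithinAt (fun x : ℝ => -x) (-1) (Iic θ) θ := by
    exact (hasDerivAt_neg' θ).hasDerivWithinAt (s := Iic θ)
  have hmaps : MapsTo (fun x : ℝ => -x) (Iic θ) (Ici (-θ)) := fun z hz => show -θ ≤ -z from neg_le_neg hz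
  have h2 := h1.comp θ hnegW hmaps
  simp only [Function.comp_def, neg_neg] at h2
  refine h2.congr_deriv ?_
  simp only [neg_lt_zero]
  ring


/-- deterministic per-cycle core of Theorem 1. With `f`
nondecreasing, right-continuous, vanishing on `(-∞,0]`, `μ` its
Lebesgue–Stieltjes measure (characterized by `μ((a,b]) = f(b) − f(a)`),
`c` differentiable at `θ` with derivative `L`, `c(θ) > 0`, `c(θ) ≠ T`,
`a = (c(θ) − T)⁺` and `H(θ') = ∫₀^T f((c(θ') − t)⁺) dt`, the right and left
derivatives of `H` at `θ` are
`L·[f(c(θ)) − f(a) − 1_{L<0}(μ{c(θ)} − μ{a})]` and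
`L·[f(c(θ)) − f(a) − 1_{L>0}(μ{c(θ)} − μ{a})]`. -/
theorem stmt_5 (f : ℝ → ℝ) (hf_mono : Monotone f)
    (hf_rc : ∀ x, ContinuousWithinAt f (Ici x) x)
    (hf0 : ∀ x ≤ 0, f x = 0)
    (μ : Measure ℝ)
    (hμ : ∀ a b, a ≤ b → μ (Ioc a b) = ENNReal.ofReal (f b - f a))
    (T : ℝ) (hT : 0 < T) (θ L : ℝ) (c : ℝ → ℝ)
    (hc : HasDerivAt c L θ) (hcpos : 0 < c θ) (hcT : c θ ≠ T) :
    HasDerivWithinAt (fun θ' => ∫ t in (0 : ℝ)..T, f (max (c θ' - t) 0))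
      (L * (f (c θ) - f (max (c θ - T) 0) -
        (if L < 0 then 1 else 0) *
          ((μ {c θ}).toReal - (μ {max (c θ - T) 0}).toReal)))
      (Ici θ) θ ∧
    HasDerivWithinAt (fun θ' => ∫ t in (0 : ℝ)..T, f (max (c θ' - t) 0))
      (L * (f (c θ) - f (max (c θ - T) 0) -
        (if 0 < L then 1 else 0) *
          ((μ {c θ}).toReal - (μ {max (c θ - T) 0}).toReal)))
      (Iic θ) θ := by
  -- abbreviations
  set y := c θ with hy
  set G : ℝ → ℝ := fun x => ∫ u in (0:ℝ)..x, f u with hG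
  have hint : ∀ a b : ℝ, IntervalIntegrable f volume a b := fun a b =>
    hf_mono.intervalIntegrable
  have hfmax : ∀ x : ℝ, f (max x 0) = f x := by
    intro x
    rcases le_or_gt x 0 with h | h
    · rw [max_eq_right h, hf0 x h, hf0 0 le_rfl]
    · rw [max_eq_left h.le]
  -- rewrite H
  have hH : (fun θ' => ∫ t in (0:ℝ)..T, f (max (c θ' - t) 0))
      = fun θ' => G (c θ') - G (c θ' - T) := by
    funext θ'
    have h1 : (∫ t in (0:ℝ)..T, f (max (c θ' - t) 0))
        = ∫ t in (0:ℝ)..T, f (c θ' - t) :=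
      intervalIntegral.integral_congr fun t _ => hfmax _
    rw [h1, intervalIntegral.integral_comp_sub_left f (c θ'), sub_zero]
    exact (intervalIntegral.integral_interval_sub_left (hint 0 _) (hint 0 _)).symm
  -- measurability at filters
  have hmeasAt : ∀ l : Filter ℝ, StronglyMeasurableAtFilter f l volume := fun l =>
    ⟨univ, univ_mem, hf_mono.measurable.aestronglyMeasurable⟩
  -- one-sided derivatives of G
  have hGright : ∀ x : ℝ, HasDerivWithinAt G (f x) (Ici x) x := fun x =>
    intervalIntegral.integral_hasDerivWithinAt_right (hint 0 x) (hmeasAt _)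
      ((hf_rc x).mono Ioi_subset_Ici_self)
  have hGleft : ∀ x : ℝ, HasDerivWithinAt G (Function.leftLim f x) (Iic x) x := by
    intro x
    refine intervalIntegral.integral_hasDerivWithinAt_of_tendsto_ae_right (hint 0 x)
      (s := Iic x) (t := Iic x) (hmeasAt _) ?_
    have h1 : 𝓝[Iic x] x ⊓ ae (volume : Measure ℝ) ≤ 𝓝[Iio x] x := by
      have h2 : ae (volume : Measure ℝ) ≤ 𝓟 ({x}ᶜ : Set ℝ) :=
        le_principal_iff.2 (compl_mem_ae_iff.2 (measure_singleton x))
      calc 𝓝[Iic x] x ⊓ ae (volume : Measure ℝ)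
          ≤ 𝓝[Iic x] x ⊓ 𝓟 ({x}ᶜ : Set ℝ) := inf_le_inf_left _ h2
        _ = 𝓝[Iic x ∩ {x}ᶜ] x := (nhdsWithin_inter' x (Iic x) {x}ᶜ).symm
        _ = 𝓝[Iio x] x := by
            congr 1
            ext z
            simp [lt_iff_le_and_ne]
    exact (hf_mono.tendsto_leftLim x).mono_left h1
  -- one-sided derivatives of Φ y = G y - G (y - T)
  have hinner_r : HasDerivWithinAt (fun z => G (z - T)) (f (y - T)) (Ici y) y := by
    have h1 := (hGright (y - T)).comp (x := y)
      ((hasDerivWithinAt_id y (Ici y)).sub_const T)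
      (fun z hz => sub_le_sub_right hz T)
    simpa [Function.comp_def] using h1
  have hinner_l : HasDerivWithinAt (fun z => G (z - T)) (Function.leftLim f (y - T))
      (Iic y) y := by
    have h1 := (hGleft (y - T)).comp (x := y)
      ((hasDerivWithinAt_id y (Iic y)).sub_const T)
      (fun z hz => show z - T ≤ y - T from sub_le_sub_right hz T)
    simpa [Function.comp_def] using h1
  have hΦp : HasDerivWithinAt (fun z => G z - G (z - T)) (f y - f (y - T)) (Ici y) y :=
    (hGright y).sub hinner_r
  have hΦm : HasDerivWithinAt (fun z => G z - G (z - T))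
      (Function.leftLim f y - Function.leftLim f (y - T)) (Iic y) y :=
    (hGleft y).sub hinner_l
  -- identify μ with the Stieltjes measure of f
  set F : StieltjesFunction ℝ := ⟨f, hf_mono, hf_rc⟩ with hF
  have hμF : μ = F.measure := by
    refine Measure.ext_of_Ioc' μ F.measure (fun a b h => ?_) (fun a b h => ?_)
    · rw [hμ a b h.le]; exact ENNReal.ofReal_ne_top
    · rw [hμ a b h.le, StieltjesFunction.measure_Ioc]
  have hsing : ∀ x : ℝ, (μ {x}).toReal = f x - Function.leftLim f x := by
    intro x
    rw [hμF, StieltjesFunction.measure_singleton,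
      ENNReal.toReal_ofReal (sub_nonneg.2 (hf_mono.leftLim_le le_rfl))]
  have hll0 : ∀ x ≤ (0:ℝ), Function.leftLim f x = 0 := by
    intro x hx
    have h1 : Tendsto f (𝓝[<] x) (𝓝 (0:ℝ)) := by
      have h2 : ∀ᶠ z in 𝓝[<] x, f z = 0 :=
        eventually_nhdsWithin_of_forall fun z hz => hf0 z (le_of_lt (lt_of_lt_of_le hz hx))
      exact Tendsto.congr' (h2.mono fun z h => h.symm) tendsto_const_nhds
    exact tendsto_nhds_unique (hf_mono.tendsto_leftLim x) h1
  -- value identities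
  have hE1 : f (y - T) = f (max (y - T) 0) := (hfmax _).symm
  have hE2 : Function.leftLim f y = f y - (μ {y}).toReal := by rw [hsing]; ring
  have hE3 : Function.leftLim f (y - T)
      = f (max (y - T) 0) - (μ {max (y - T) 0}).toReal := by
    rcases lt_or_gt_of_ne hcT with h | h
    · -- y < T
      have h1 : y - T < 0 := by linarith
      rw [max_eq_right h1.le, hll0 _ h1.le, hf0 0 le_rfl, hsing 0, hll0 0 le_rfl,
        hf0 0 le_rfl]
      ring
    · -- T < y
      have h1 : (0:ℝ) ≤ y - T := by linarith
      rw [max_eq_left h1, hsing]; ring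
  have hdm : Function.leftLim f y - Function.leftLim f (y - T)
      = f y - f (max (y - T) 0) - ((μ {y}).toReal - (μ {max (y - T) 0}).toReal) := by
    rw [hE2, hE3]; ring
  have hdp : f y - f (y - T) = f y - f (max (y - T) 0) := by rw [hE1]
  rw [hH]
  constructor
  · have h := compRightAux (G := fun z => G z - G (z - T)) hΦp hΦm hc
    convert h using 1
    rw [hdm, hdp] at h ⊢
    by_cases hL : L < 0 <;> simp [hL] <;> ring
  · have h := compLeftAux (G := fun z => G z - G (z - T)) hΦp hΦm hc
    convert h using 1
    rw [hdm, hdp] at h ⊢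
    by_cases hL : 0 < L <;> simp [hL] <;> ring
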